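/- Let n ≥ 1 and define x ∈ ℝ^n by x_i = √i − √(i−1) for i ∈ {1,…,n}. Then for every nonempty subset A ⊆ {1,…,n}, (∑_{i∈A} x_i)² ≤ |A|; equivalently, max over nonempty A ⊆ {1,…,n} of (1/|A|)·(∑_{i∈A} x_i)² equals 1, the maximum being attained by A = {1,…,d} for any d. -/

import Mathlib

lemma xmono_aux (a b : ℕ) (ha : 1 ≤ a) (hab : a ≤ b) :
    Real.sqrt b - Real.sqrt ((b : ℝ) - 1) ≤ Real.sqrt a - Real.sqrt ((a : ℝ) - 1) := by
  have ha1 : (0:ℝ) ≤ (a:ℝ) - 1 := by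
    have : (1:ℝ) ≤ (a:ℝ) := by exact_mod_cast ha
    linarith
  have hb1 : (0:ℝ) ≤ (b:ℝ) - 1 := by
    have : (1:ℝ) ≤ (b:ℝ) := by exact_mod_cast (le_trans ha hab)
    linarith
  have hsa : Real.sqrt a ^ 2 = (a:ℝ) := Real.sq_sqrt (by positivity)
  have hsa1 : Real.sqrt ((a:ℝ)-1) ^ 2 = (a:ℝ) - 1 := Real.sq_sqrt ha1
  have hsb : Real.sqrt b ^ 2 = (b:ℝ) := Real.sq_sqrt (by positivity)
  have hsb1 : Real.sqrt ((b:ℝ)-1) ^ 2 = (b:ℝ) - 1 := Real.sq_sqrt hb1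
  have h1 : Real.sqrt a ≤ Real.sqrt b := Real.sqrt_le_sqrt (by exact_mod_cast hab)
  have h2 : Real.sqrt ((a:ℝ)-1) ≤ Real.sqrt ((b:ℝ)-1) := Real.sqrt_le_sqrt (by
    have : (a:ℝ) ≤ (b:ℝ) := by exact_mod_cast hab
    linarith)
  have h3 : (1:ℝ) ≤ Real.sqrt a := by
    rw [show (1:ℝ) = Real.sqrt 1 by simp]
    exact Real.sqrt_le_sqrt (by exact_mod_cast ha)
  have h4 : 0 ≤ Real.sqrt ((a:ℝ)-1) := Real.sqrt_nonneg _
  have h5 : 0 ≤ Real.sqrt ((b:ℝ)-1) := Real.sqrt_nonneg _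
  have hd : Real.sqrt ((a:ℝ)-1) ≤ Real.sqrt a := Real.sqrt_le_sqrt (by linarith)
  have key : (Real.sqrt b - Real.sqrt ((b:ℝ)-1)) * (Real.sqrt b + Real.sqrt ((b:ℝ)-1))
      = (Real.sqrt a - Real.sqrt ((a:ℝ)-1)) * (Real.sqrt a + Real.sqrt ((a:ℝ)-1)) := by
    nlinarith [hsa, hsa1, hsb, hsb1]
  nlinarith [key, hd, h1, h2, h3, h4, h5]

lemma sum_le_sqrt_card (x : ℕ → ℝ)
    (hx : ∀ i, x i = Real.sqrt i - Real.sqrt ((i : ℝ) - 1)) :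
    ∀ k : ℕ, ∀ A : Finset ℕ, A.card = k → (∀ i ∈ A, 1 ≤ i) →
      (∑ i ∈ A, x i) ≤ Real.sqrt k := by
  intro k
  induction k with
  | zero =>
    intro A hA _
    rw [Finset.card_eq_zero.mp hA]
    simp
  | succ k ih =>
    intro A hA hpos
    have hne : A.Nonempty := Finset.card_pos.mp (by omega)
    set m := A.max' hne with hm
    have hmem : m ∈ A := A.max'_mem hne
    have hm1 : 1 ≤ m := hpos m hmem
    have hsub : A ⊆ Finset.Icc 1 m := by
      intro i hi
      exact Finset.mem_Icc.mpr ⟨hpos i hi, A.le_max' i hi⟩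
    have hcard : k + 1 ≤ m := by
      have := Finset.card_le_card hsub
      rw [hA, Nat.card_Icc] at this
      omega
    have herase : (A.erase m).card = k := by
      rw [Finset.card_erase_of_mem hmem, hA]; omega
    have hsum : ∑ i ∈ A, x i = x m + ∑ i ∈ A.erase m, x i :=
      (Finset.add_sum_erase A x hmem).symm
    have hih := ih (A.erase m) herase (fun i hi => hpos i (Finset.mem_of_mem_erase hi))
    have hxm : x m ≤ Real.sqrt (k+1 : ℕ) - Real.sqrt k := by
      rw [hx m]
      have := xmono_aux (k+1) m (by omega) hcard
      have hc : ((k+1 : ℕ) : ℝ) - 1 = (k : ℝ) := by push_cast; ring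
      rw [hc] at this
      exact this
    rw [hsum]
    have : Real.sqrt (k+1 : ℕ) - Real.sqrt k + Real.sqrt k = Real.sqrt (k+1 : ℕ) := by ring
    linarith

lemma telescope_sum (x : ℕ → ℝ)
    (hx : ∀ i, x i = Real.sqrt i - Real.sqrt ((i : ℝ) - 1)) (d : ℕ) :
    ∑ i ∈ Finset.Icc 1 d, x i = Real.sqrt d := by
  induction d with
  | zero => simp
  | succ d ih =>
    rw [Finset.sum_Icc_succ_top (by omega : 1 ≤ d + 1), ih, hx]
    push_cast
    ring

/-- Tightness of the L1–L2 norm relation: for `xᵢ = √i − √(i−1)`, every nonempty subset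
`A ⊆ {1,…,n}` satisfies `(∑_{i∈A} xᵢ)² ≤ |A|`, and equality `(∑_{i=1}^d xᵢ)² = d` holds
for the initial segments `A = {1,…,d}`; hence the maximum of `(1/|A|)(∑_{i∈A} xᵢ)²` over
nonempty subsets equals `1`. -/
theorem prefix_sqrt_vector_max_ratio (n : ℕ) (hn : 1 ≤ n) (x : ℕ → ℝ)
    (hx : ∀ i, x i = Real.sqrt i - Real.sqrt ((i : ℝ) - 1)) :
    (∀ A : Finset ℕ, A.Nonempty → A ⊆ Finset.Icc 1 n →
      (∑ i ∈ A, x i) ^ 2 ≤ (A.card : ℝ)) ∧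
    (∀ d, 1 ≤ d → d ≤ n →
      (∑ i ∈ Finset.Icc 1 d, x i) ^ 2 = ((Finset.Icc 1 d).card : ℝ)) := by
  constructor
  · intro A _ hsub
    have hpos : ∀ i ∈ A, 1 ≤ i := fun i hi => (Finset.mem_Icc.mp (hsub hi)).1
    have hle := sum_le_sqrt_card x hx A.card A rfl hpos
    have hnn : (0:ℝ) ≤ ∑ i ∈ A, x i := by
      apply Finset.sum_nonneg
      intro i hi
      rw [hx i]
      have : Real.sqrt ((i:ℝ) - 1) ≤ Real.sqrt i := Real.sqrt_le_sqrt (by linarith [Nat.cast_nonneg (α := ℝ) i])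
      linarith
    calc (∑ i ∈ A, x i) ^ 2 ≤ Real.sqrt A.card ^ 2 := by
          apply pow_le_pow_left₀ hnn hle
      _ = (A.card : ℝ) := Real.sq_sqrt (by positivity)
  · intro d _ _
    rw [telescope_sum x hx d, Real.sq_sqrt (by positivity), Nat.card_Icc]
    push_cast
    ring
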